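/- arXiv:2009.12899 — 5 statements merged into one kernel-verified Lean document; each statement's English description precedes it below -/
import Mathlib

section
/- Let a, b, c be positive integers with a > c, and let 2 < β < γ. For all sufficiently large integers x, if z is an integer with ((b/(c x² log x)) + a/c)^(1/γ) · x < z < (a/c)^(1/β) · x, then there exists a real number α with β ≤ α ≤ γ such that a·x^α + b = c·z^α. -/
lemma cont_rpow_base' {x : ℝ} (hx : 0 < x) : Continuous fun α : ℝ => x ^ α := by
  have h : (fun α : ℝ => x ^ α) = fun α => Real.exp (Real.log x * α) := by
    funext α; rw [Real.rpow_def_of_pos hx]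
  rw [h]; exact Real.continuous_exp.comp (continuous_const.mul continuous_id)

theorem stmt0 (a b c : ℕ) (ha : 0 < a) (hb : 0 < b) (hc : 0 < c) (hca : c < a)
    (β γ : ℝ) (hβ : 2 < β) (hβγ : β < γ) :
    ∃ x₀ : ℕ, ∀ x : ℕ, x₀ ≤ x → ∀ z : ℤ,
      ((b : ℝ) / (c * (x : ℝ) ^ 2 * Real.log x) + (a : ℝ) / c) ^ (1 / γ) * x < (z : ℝ) →
      (z : ℝ) < ((a : ℝ) / c) ^ (1 / β) * x →
      ∃ α : ℝ, β ≤ α ∧ α ≤ γ ∧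
        (a : ℝ) * (x : ℝ) ^ α + (b : ℝ) = (c : ℝ) * (z : ℝ) ^ α := by
  have ha' : (0:ℝ) < a := by exact_mod_cast ha
  have hb' : (0:ℝ) < b := by exact_mod_cast hb
  have hc' : (0:ℝ) < c := by exact_mod_cast hc
  have hac : (1:ℝ) < (a:ℝ)/c := by
    rw [lt_div_iff₀ hc']; exact_mod_cast by simpa using hca
  have hβ0 : (0:ℝ) < β := by linarith
  have hγ0 : (0:ℝ) < γ := by linarith
  -- eventually log x ≤ x ^ (γ - 2)
  have hlo := (isLittleO_log_rpow_atTop (by linarith : (0:ℝ) < γ - 2)).bound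
    (c := 1) one_pos
  have hev : ∀ᶠ t : ℝ in Filter.atTop, Real.log t ≤ t ^ (γ - 2) ∧ 2 ≤ t := by
    filter_upwards [hlo, Filter.eventually_ge_atTop (2:ℝ),
      Filter.eventually_ge_atTop (1:ℝ)] with t h1 h2 h3
    refine ⟨?_, h2⟩
    have hlog : 0 ≤ Real.log t := Real.log_nonneg h3
    have := h1
    rw [Real.norm_of_nonneg hlog, one_mul,
      Real.norm_of_nonneg (Real.rpow_nonneg (by linarith) _)] at this
    exact this
  have hevn : ∀ᶠ x : ℕ in Filter.atTop,
      Real.log (x:ℝ) ≤ (x:ℝ) ^ (γ - 2) ∧ 2 ≤ (x:ℝ) :=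
    tendsto_natCast_atTop_atTop.eventually hev
  obtain ⟨x₀, hx₀⟩ := Filter.eventually_atTop.mp hevn
  refine ⟨x₀, fun x hx z h1 h2 => ?_⟩
  obtain ⟨hlogle, hx2⟩ := hx₀ x hx
  have hx0 : (0:ℝ) < x := by linarith
  have hlogpos : 0 < Real.log x := Real.log_pos (by linarith)
  set L : ℝ := (b : ℝ) / (c * (x : ℝ) ^ 2 * Real.log x) + (a : ℝ) / c with hL
  have hLpos : 0 < L := by
    apply add_pos (div_pos hb' (by positivity)) (div_pos ha' hc')
  have hz0 : (0:ℝ) < z := lt_trans (by positivity) h1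
  -- z^β < (a/c) * x^β
  have hzβ : (z:ℝ) ^ β < (a/c : ℝ) * (x:ℝ) ^ β := by
    have h := Real.rpow_lt_rpow hz0.le h2 hβ0
    rwa [Real.mul_rpow (Real.rpow_nonneg (by positivity) _) hx0.le,
      ← Real.rpow_mul (by positivity), one_div, inv_mul_cancel₀ hβ0.ne',
      Real.rpow_one] at h
  -- L * x^γ < z^γ
  have hzγ : L * (x:ℝ) ^ γ < (z:ℝ) ^ γ := by
    have h := Real.rpow_lt_rpow (by positivity) h1 hγ0
    rwa [Real.mul_rpow (Real.rpow_nonneg hLpos.le _) hx0.le,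
      ← Real.rpow_mul hLpos.le, one_div, inv_mul_cancel₀ hγ0.ne',
      Real.rpow_one] at h
  -- key : x^2 * log x ≤ x^γ
  have hkey : (x:ℝ) ^ 2 * Real.log x ≤ (x:ℝ) ^ γ := by
    calc (x:ℝ) ^ 2 * Real.log x ≤ (x:ℝ) ^ 2 * (x:ℝ) ^ (γ - 2) := by
          gcongr
      _ = (x:ℝ) ^ γ := by
          rw [← Real.rpow_natCast (x:ℝ) 2, ← Real.rpow_add hx0]
          norm_num
  -- a * x^γ + b ≤ c * (L * x^γ)
  have hfγ : (a:ℝ) * (x:ℝ) ^ γ + b ≤ c * (L * (x:ℝ) ^ γ) := by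
    have hcL : (c:ℝ) * L = (b:ℝ) / ((x:ℝ) ^ 2 * Real.log x) + a := by
      rw [hL]; field_simp
    have hb2 : (b:ℝ) ≤ (b:ℝ) / ((x:ℝ) ^ 2 * Real.log x) * (x:ℝ) ^ γ := by
      rw [div_mul_eq_mul_div, le_div_iff₀ (by positivity)]
      calc (b:ℝ) * ((x:ℝ) ^ 2 * Real.log x) ≤ (b:ℝ) * (x:ℝ) ^ γ := by gcongr
        _ = _ := by ring
    calc (a:ℝ) * (x:ℝ) ^ γ + b
        ≤ (a:ℝ) * (x:ℝ) ^ γ + (b:ℝ) / ((x:ℝ) ^ 2 * Real.log x) * (x:ℝ) ^ γ := by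
          linarith
      _ = c * (L * (x:ℝ) ^ γ) := by rw [← mul_assoc, hcL]; ring
  set f : ℝ → ℝ := fun α => (c:ℝ) * (z:ℝ) ^ α - ((a:ℝ) * (x:ℝ) ^ α + b) with hf
  have hcont : ContinuousOn f (Set.Icc β γ) := by
    apply Continuous.continuousOn
    exact ((continuous_const.mul (cont_rpow_base' hz0)).sub
      ((continuous_const.mul (cont_rpow_base' hx0)).add continuous_const))
  have hfβ : f β < 0 := by
    have : (c:ℝ) * (z:ℝ) ^ β < (c:ℝ) * ((a/c : ℝ) * (x:ℝ) ^ β) := by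
      exact mul_lt_mul_of_pos_left hzβ hc'
    have hceq : (c:ℝ) * ((a/c : ℝ) * (x:ℝ) ^ β) = (a:ℝ) * (x:ℝ) ^ β := by
      field_simp
    simp only [hf]
    rw [hceq] at this
    linarith
  have hfγ' : 0 < f γ := by
    have : (c:ℝ) * (L * (x:ℝ) ^ γ) < (c:ℝ) * (z:ℝ) ^ γ :=
      mul_lt_mul_of_pos_left hzγ hc'
    simp only [hf]
    linarith
  have hmem : (0:ℝ) ∈ Set.Icc (f β) (f γ) := ⟨hfβ.le, hfγ'.le⟩
  obtain ⟨α, hα, hα0⟩ := intermediate_value_Icc hβγ.le hcont hmem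
  exact ⟨α, hα.1, hα.2, by simp only [hf] at hα0; linarith⟩
end

section
/- Let a, b, c be positive integers with c > a, and let 2 < β < γ. For all sufficiently large integers x, if z is an integer with (a/(c − b/(x² log x)))^(1/β) · x < z < (a/c)^(1/γ) · x, then there exists a real number α with β ≤ α ≤ γ such that a·x^α + b = c·z^α. -/
open Filter Real

theorem stmt1 (a b c : ℕ) (ha : 0 < a) (hb : 0 < b) (hc : 0 < c) (hac : a < c)
    (β γ : ℝ) (hβ : 2 < β) (hβγ : β < γ) :
    ∃ x₀ : ℕ, ∀ x : ℕ, x₀ ≤ x → ∀ z : ℤ,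
      ((a : ℝ) / ((c : ℝ) - (b : ℝ) / ((x : ℝ) ^ 2 * Real.log x))) ^ (1 / β) * x < (z : ℝ) →
      (z : ℝ) < ((a : ℝ) / c) ^ (1 / γ) * x →
      ∃ α : ℝ, β ≤ α ∧ α ≤ γ ∧
        (a : ℝ) * (x : ℝ) ^ α + (b : ℝ) = (c : ℝ) * (z : ℝ) ^ α := by
  have haR : (0:ℝ) < a := by exact_mod_cast ha
  have hbR : (0:ℝ) < b := by exact_mod_cast hb
  have hcR : (0:ℝ) < c := by exact_mod_cast hc
  have hacR : (a:ℝ) < c := by exact_mod_cast hac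
  have hβ0 : (0:ℝ) < β := by linarith
  have hγ0 : (0:ℝ) < γ := by linarith
  have hcast : Tendsto (fun x : ℕ => (x:ℝ)) atTop atTop := tendsto_natCast_atTop_atTop
  have hlog : Tendsto (fun x : ℕ => (x:ℝ)^2 * Real.log x) atTop atTop := by
    apply Filter.Tendsto.atTop_mul_atTop₀
    · exact (tendsto_pow_atTop (two_ne_zero)).comp hcast
    · exact Real.tendsto_log_atTop.comp hcast
  have H2 : ∀ᶠ x : ℕ in atTop, (b:ℝ) < (x:ℝ)^2 * Real.log x := hlog.eventually_gt_atTop _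
  -- H3 on reals
  have hlittle : (fun y : ℝ => Real.log y) =o[atTop] fun y : ℝ => y ^ (β - 2) :=
    isLittleO_log_rpow_atTop (by linarith)
  have H3' : ∀ᶠ y : ℝ in atTop, y ^ 2 * Real.log y ≤ ((a:ℝ)/c) * y ^ β := by
    filter_upwards [hlittle.bound (div_pos haR hcR), eventually_ge_atTop (1:ℝ)] with y hy hy1
    have hy0 : (0:ℝ) < y := by linarith
    have hlog0 : 0 ≤ Real.log y := Real.log_nonneg hy1
    have hr0 : 0 ≤ y ^ (β - 2) := Real.rpow_nonneg hy0.le _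
    rw [Real.norm_eq_abs, Real.norm_eq_abs, abs_of_nonneg hlog0, abs_of_nonneg hr0] at hy
    have key : y ^ 2 * Real.log y ≤ y ^ 2 * (((a:ℝ)/c) * y ^ (β - 2)) := by
      apply mul_le_mul_of_nonneg_left hy (by positivity)
    calc y ^ 2 * Real.log y ≤ y ^ 2 * (((a:ℝ)/c) * y ^ (β - 2)) := key
      _ = ((a:ℝ)/c) * (y ^ (2:ℝ) * y ^ (β - 2)) := by
          rw [← Real.rpow_natCast y 2]; push_cast; ring
      _ = ((a:ℝ)/c) * y ^ β := by
          rw [← Real.rpow_add hy0]; ring_nf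
  have H3 : ∀ᶠ x : ℕ in atTop, (x:ℝ) ^ 2 * Real.log x ≤ ((a:ℝ)/c) * (x:ℝ) ^ β :=
    hcast.eventually H3'
  have H1 : ∀ᶠ x : ℕ in atTop, 2 ≤ x := eventually_ge_atTop 2
  obtain ⟨x₀, hx₀⟩ := eventually_atTop.mp (H1.and (H2.and H3))
  refine ⟨x₀, fun x hx z hz1 hz2 => ?_⟩
  obtain ⟨hx2, hbL, hL3⟩ := hx₀ x hx
  set X := (x:ℝ) with hXdef
  have hX1 : (1:ℝ) ≤ X := by
    have h1 : 1 ≤ x := le_trans one_le_two hx2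
    rw [hXdef]; exact_mod_cast h1
  have hX0 : (0:ℝ) < X := by linarith
  set L := X ^ 2 * Real.log X with hLdef
  have hL0 : (0:ℝ) < L := lt_trans hbR hbL
  have hδ1 : (b:ℝ)/L < 1 := (div_lt_one hL0).2 hbL
  have hδ0 : (0:ℝ) < (b:ℝ)/L := div_pos hbR hL0
  have hc1 : (1:ℝ) ≤ c := by exact_mod_cast hc
  have hcδ : (0:ℝ) < (c:ℝ) - (b:ℝ)/L := by linarith
  -- lower bound refinement : (a/c)^(1/β) * X < z
  have hfrac : (a:ℝ)/c ≤ (a:ℝ)/((c:ℝ) - (b:ℝ)/L) :=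
    div_le_div_of_nonneg_left haR.le hcδ (by linarith)
  have hzlow : ((a:ℝ)/c) ^ (1/β) * X < (z:ℝ) := by
    refine lt_of_le_of_lt ?_ hz1
    apply mul_le_mul_of_nonneg_right _ hX0.le
    exact Real.rpow_le_rpow (by positivity) hfrac (by positivity)
  have hz0 : (0:ℝ) < (z:ℝ) := lt_of_le_of_lt (by positivity) hzlow
  -- key at β : a * X^β + b < c * z^β
  have hzrβ : ((a:ℝ)/((c:ℝ) - (b:ℝ)/L)) * X ^ β < (z:ℝ) ^ β := by
    have := Real.rpow_lt_rpow (by positivity) hz1 hβ0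
    rwa [Real.mul_rpow (by positivity) hX0.le, one_div,
      Real.rpow_inv_rpow (by positivity) hβ0.ne'] at this
  have haXβ : (a:ℝ) * X ^ β < ((c:ℝ) - (b:ℝ)/L) * (z:ℝ) ^ β := by
    have h := mul_lt_mul_of_pos_left hzrβ hcδ
    have heq : ((c:ℝ) - (b:ℝ)/L) * (((a:ℝ)/((c:ℝ) - (b:ℝ)/L)) * X ^ β) = (a:ℝ) * X ^ β := by
      rw [← mul_assoc, mul_comm ((c:ℝ) - (b:ℝ)/L), div_mul_cancel₀ _ hcδ.ne']
    rw [heq] at h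
    exact h
  have hzβL : L ≤ (z:ℝ) ^ β := by
    have h1 : ((a:ℝ)/c) * X ^ β < (z:ℝ) ^ β := by
      have := Real.rpow_lt_rpow (by positivity) hzlow hβ0
      rwa [Real.mul_rpow (by positivity) hX0.le, one_div,
        Real.rpow_inv_rpow (by positivity) hβ0.ne'] at this
    exact le_of_lt (lt_of_le_of_lt hL3 h1)
  have hbzβ : (b:ℝ) ≤ ((b:ℝ)/L) * (z:ℝ) ^ β := by
    calc (b:ℝ) = ((b:ℝ)/L) * L := by field_simp
      _ ≤ ((b:ℝ)/L) * (z:ℝ) ^ β := mul_le_mul_of_nonneg_left hzβL hδ0.le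
  have fβ : (a:ℝ) * X ^ β + (b:ℝ) < (c:ℝ) * (z:ℝ) ^ β := by nlinarith [haXβ, hbzβ]
  -- key at γ : c * z^γ < a * X^γ + b
  have fγ : (c:ℝ) * (z:ℝ) ^ γ < (a:ℝ) * X ^ γ + (b:ℝ) := by
    have h1 : (z:ℝ) ^ γ < ((a:ℝ)/c) * X ^ γ := by
      have := Real.rpow_lt_rpow hz0.le hz2 hγ0
      rwa [Real.mul_rpow (by positivity) hX0.le, one_div,
        Real.rpow_inv_rpow (by positivity) hγ0.ne'] at this
    have h2 : (c:ℝ) * (z:ℝ) ^ γ < (c:ℝ) * (((a:ℝ)/c) * X ^ γ) :=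
      mul_lt_mul_of_pos_left h1 hcR
    have h3 : (c:ℝ) * (((a:ℝ)/c) * X ^ γ) = (a:ℝ) * X ^ γ := by field_simp
    linarith
  -- IVT
  set f : ℝ → ℝ := fun u => (c:ℝ) * (z:ℝ) ^ u - (a:ℝ) * X ^ u with hf
  have hcont : ContinuousOn f (Set.Icc β γ) := by
    have c1 : Continuous fun u : ℝ => (z:ℝ) ^ u := by
      simp only [Real.rpow_def_of_pos hz0]
      exact Real.continuous_exp.comp (continuous_const.mul continuous_id)
    have c2 : Continuous fun u : ℝ => X ^ u := by
      simp only [Real.rpow_def_of_pos hX0]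
      exact Real.continuous_exp.comp (continuous_const.mul continuous_id)
    exact ((continuous_const.mul c1).sub (continuous_const.mul c2)).continuousOn
  have hmem : (b:ℝ) ∈ Set.Icc (f γ) (f β) := by
    constructor
    · simp only [hf]; linarith
    · simp only [hf]; linarith
  obtain ⟨α, hαmem, hαeq⟩ := intermediate_value_Icc' hβγ.le hcont hmem
  exact ⟨α, hαmem.1, hαmem.2, by simp only [hf] at hαeq; linarith⟩
end

section
/- Let 2 < β < γ. For all sufficiently large integers x, if z is an integer with 2^(1/γ)·(x + 1/(x·⌈log x⌉)) < z < 2^(1/β)·x, then there exists a real number α with β ≤ α ≤ γ such that x^α + (x + 1/(x·⌈log x⌉))^α = z^α. -/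
theorem stmt2 (β γ : ℝ) (hβ : 2 < β) (hβγ : β < γ) :
    ∃ x₀ : ℕ, ∀ x : ℕ, x₀ ≤ x → ∀ z : ℤ,
      (2 : ℝ) ^ (1 / γ) * ((x : ℝ) + 1 / ((x : ℝ) * (⌈Real.log x⌉ : ℝ))) < (z : ℝ) →
      (z : ℝ) < (2 : ℝ) ^ (1 / β) * x →
      ∃ α : ℝ, β ≤ α ∧ α ≤ γ ∧
        (x : ℝ) ^ α + ((x : ℝ) + 1 / ((x : ℝ) * (⌈Real.log x⌉ : ℝ))) ^ α = (z : ℝ) ^ α := by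
  refine ⟨3, fun x hx z hz1 hz2 => ?_⟩
  have hx3 : (3:ℝ) ≤ x := by exact_mod_cast hx
  have hx0 : (0:ℝ) < x := by linarith
  have hlog : 0 < Real.log x := Real.log_pos (by linarith)
  have hceil : (0:ℝ) < (⌈Real.log x⌉ : ℝ) := by exact_mod_cast Int.ceil_pos.mpr hlog
  set y : ℝ := (x:ℝ) + 1 / ((x:ℝ) * (⌈Real.log x⌉ : ℝ)) with hy
  have hxy : (x:ℝ) < y := by
    have h : 0 < 1 / ((x:ℝ) * (⌈Real.log x⌉ : ℝ)) := by positivity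
    simp only [hy]; linarith
  have hy0 : (0:ℝ) < y := lt_trans hx0 hxy
  have hβ0 : (0:ℝ) < β := by linarith
  have hγ0 : (0:ℝ) < γ := by linarith
  have hz0 : (0:ℝ) < z := lt_trans (by positivity) hz1
  set f : ℝ → ℝ := fun α => (x:ℝ)^α + y^α - (z:ℝ)^α with hf
  have hcont : Continuous f := by
    refine Continuous.sub (Continuous.add ?_ ?_) ?_
    · exact continuous_const.rpow continuous_id fun _ => Or.inl (ne_of_gt hx0)
    · exact continuous_const.rpow continuous_id fun _ => Or.inl (ne_of_gt hy0)
    · exact continuous_const.rpow continuous_id fun _ => Or.inl (ne_of_gt hz0)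
  have hfβ : 0 < f β := by
    have h1 : (z:ℝ)^β < ((2:ℝ)^(1/β) * x)^β :=
      Real.rpow_lt_rpow (le_of_lt hz0) hz2 hβ0
    have h2 : ((2:ℝ)^(1/β) * x)^β = 2 * (x:ℝ)^β := by
      rw [Real.mul_rpow (by positivity) (le_of_lt hx0), ← Real.rpow_mul (by norm_num)]
      rw [one_div_mul_cancel (ne_of_gt hβ0), Real.rpow_one]
    have h3 : (x:ℝ)^β < y^β := Real.rpow_lt_rpow (le_of_lt hx0) hxy hβ0
    simp only [hf]; rw [h2] at h1; linarith
  have hfγ : f γ < 0 := by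
    have h1 : ((2:ℝ)^(1/γ) * y)^γ < (z:ℝ)^γ :=
      Real.rpow_lt_rpow (by positivity) hz1 hγ0
    have h2 : ((2:ℝ)^(1/γ) * y)^γ = 2 * y^γ := by
      rw [Real.mul_rpow (by positivity) (le_of_lt hy0), ← Real.rpow_mul (by norm_num)]
      rw [one_div_mul_cancel (ne_of_gt hγ0), Real.rpow_one]
    have h3 : (x:ℝ)^γ < y^γ := Real.rpow_lt_rpow (le_of_lt hx0) hxy hγ0
    simp only [hf]; rw [h2] at h1; linarith
  have h0 : (0:ℝ) ∈ Set.Icc (f γ) (f β) := ⟨le_of_lt hfγ, le_of_lt hfβ⟩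
  obtain ⟨α, hα, hfα⟩ :=
    intermediate_value_Icc' (le_of_lt hβγ) hcont.continuousOn h0
  refine ⟨α, hα.1, hα.2, ?_⟩
  have : (x:ℝ)^α + y^α - (z:ℝ)^α = 0 := hfα
  linarith
end

section
/- Let a, b, c be positive integers, α > 0 real, and n, X, Y, Z positive integers with a·X^α + b·Y^α = c·Z^α. Suppose {(nX)^α / c} < 1/(4ac) and {(nY)^α / c} < 1/(4bc). Then {(nX)^α} < 1/(4a), {(nY)^α} < 1/(4b), {(nZ)^α} < 1/(2c), and consequently a·⌊(nX)^α⌋ + b·⌊(nY)^α⌋ = c·⌊(nZ)^α⌋ with max({(nX)^α}, {(nY)^α}, {(nZ)^α}) < 1/2. -/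
lemma fract_eq_of_div (c : ℕ) (hc : 0 < c) (w : ℝ) (h : Int.fract (w / c) < 1 / c) :
    Int.fract w = c * Int.fract (w / c) := by
  have hc0 : (c : ℝ) ≠ 0 := Nat.cast_ne_zero.mpr hc.ne'
  have hnn : (0 : ℝ) ≤ (c : ℝ) * Int.fract (w / c) :=
    mul_nonneg (Nat.cast_nonneg c) (Int.fract_nonneg _)
  have hlt : (c : ℝ) * Int.fract (w / c) < 1 := by
    have := mul_lt_mul_of_pos_left h (show (0:ℝ) < c by positivity)
    rwa [mul_one_div, div_self hc0] at this
  have hw : w = c * Int.fract (w / c) + ((c : ℤ) * ⌊w / c⌋ : ℤ) := by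
    rw [Int.fract]
    push_cast
    field_simp
    ring
  conv_lhs => rw [hw]
  rw [Int.fract_add_intCast, Int.fract_eq_self.mpr ⟨hnn, hlt⟩]

lemma fract_nat_mul_le (a : ℕ) (u : ℝ) : Int.fract ((a : ℝ) * u) ≤ a * Int.fract u := by
  have h1 : (a : ℝ) * u = (a : ℝ) * Int.fract u + ((a : ℤ) * ⌊u⌋ : ℤ) := by
    rw [Int.fract]; push_cast; ring
  rw [h1, Int.fract_add_intCast]
  have h2 : (0 : ℝ) ≤ (a : ℝ) * Int.fract u :=
    mul_nonneg (Nat.cast_nonneg a) (Int.fract_nonneg u)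
  have := Int.floor_nonneg.mpr h2
  rw [Int.fract]
  have : (0 : ℝ) ≤ ⌊(a : ℝ) * Int.fract u⌋ := by exact_mod_cast this
  linarith

theorem stmt8 (a b c : ℕ) (ha : 0 < a) (hb : 0 < b) (hc : 0 < c)
    (α : ℝ) (hα : 0 < α) (n X Y Z : ℕ) (hn : 0 < n) (hX : 0 < X) (hY : 0 < Y) (hZ : 0 < Z)
    (heq : (a : ℝ) * (X : ℝ) ^ α + (b : ℝ) * (Y : ℝ) ^ α = (c : ℝ) * (Z : ℝ) ^ α)
    (h1 : Int.fract (((n : ℝ) * X) ^ α / c) < 1 / (4 * a * c))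
    (h2 : Int.fract (((n : ℝ) * Y) ^ α / c) < 1 / (4 * b * c)) :
    Int.fract (((n : ℝ) * X) ^ α) < 1 / (4 * a) ∧
    Int.fract (((n : ℝ) * Y) ^ α) < 1 / (4 * b) ∧
    Int.fract (((n : ℝ) * Z) ^ α) < 1 / (2 * c) ∧
    (a : ℤ) * ⌊((n : ℝ) * X) ^ α⌋ + (b : ℤ) * ⌊((n : ℝ) * Y) ^ α⌋
      = (c : ℤ) * ⌊((n : ℝ) * Z) ^ α⌋ ∧
    max (Int.fract (((n : ℝ) * X) ^ α))
      (max (Int.fract (((n : ℝ) * Y) ^ α)) (Int.fract (((n : ℝ) * Z) ^ α))) < 1 / 2 := by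
  set x : ℝ := ((n : ℝ) * X) ^ α with hxdef
  set y : ℝ := ((n : ℝ) * Y) ^ α with hydef
  set z : ℝ := ((n : ℝ) * Z) ^ α with hzdef
  have ha' : (0 : ℝ) < a := by exact_mod_cast ha
  have hb' : (0 : ℝ) < b := by exact_mod_cast hb
  have hc' : (0 : ℝ) < c := by exact_mod_cast hc
  have hn' : (0 : ℝ) ≤ n := Nat.cast_nonneg n
  -- key equation: c * z = a * x + b * y
  have hkey : (c : ℝ) * z = a * x + b * y := by
    rw [hxdef, hydef, hzdef,
      Real.mul_rpow hn' (Nat.cast_nonneg X),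
      Real.mul_rpow hn' (Nat.cast_nonneg Y),
      Real.mul_rpow hn' (Nat.cast_nonneg Z)]
    linear_combination -(n : ℝ) ^ α * heq
  -- bounds for x and y fracts
  have h1c : Int.fract (x / c) < 1 / c := by
    refine h1.trans_le ?_
    apply one_div_le_one_div_of_le hc'
    have ha1 : (1 : ℝ) ≤ a := by exact_mod_cast ha
    nlinarith
  have h2c : Int.fract (y / c) < 1 / c := by
    refine h2.trans_le ?_
    apply one_div_le_one_div_of_le hc'
    have hb1 : (1 : ℝ) ≤ b := by exact_mod_cast hb
    nlinarith
  have hfx : Int.fract x = c * Int.fract (x / c) := fract_eq_of_div c hc x h1c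
  have hfy : Int.fract y = c * Int.fract (y / c) := fract_eq_of_div c hc y h2c
  have hx4 : Int.fract x < 1 / (4 * a) := by
    rw [hfx]
    have : (c : ℝ) * Int.fract (x / c) < c * (1 / (4 * a * c)) :=
      mul_lt_mul_of_pos_left h1 hc'
    calc (c : ℝ) * Int.fract (x / c) < c * (1 / (4 * a * c)) := this
      _ = 1 / (4 * a) := by field_simp
  have hy4 : Int.fract y < 1 / (4 * b) := by
    rw [hfy]
    calc (c : ℝ) * Int.fract (y / c) < c * (1 / (4 * b * c)) :=
        mul_lt_mul_of_pos_left h2 hc'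
      _ = 1 / (4 * b) := by field_simp
  -- bound for z fract
  have hz2 : Int.fract z < 1 / (2 * c) := by
    have hzeq : z = (a : ℝ) * (x / c) + (b : ℝ) * (y / c) := by
      field_simp
      linarith [hkey]
    have hle : Int.fract z ≤ a * Int.fract (x / c) + b * Int.fract (y / c) := by
      rw [hzeq]
      calc Int.fract ((a : ℝ) * (x / c) + (b : ℝ) * (y / c))
          ≤ Int.fract ((a : ℝ) * (x / c)) + Int.fract ((b : ℝ) * (y / c)) :=
            Int.fract_add_le _ _
        _ ≤ a * Int.fract (x / c) + b * Int.fract (y / c) :=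
            add_le_add (fract_nat_mul_le a _) (fract_nat_mul_le b _)
    have hb1 : (a : ℝ) * Int.fract (x / c) < a * (1 / (4 * a * c)) :=
      mul_lt_mul_of_pos_left h1 ha'
    have hb2 : (b : ℝ) * Int.fract (y / c) < b * (1 / (4 * b * c)) :=
      mul_lt_mul_of_pos_left h2 hb'
    have e1 : (a : ℝ) * (1 / (4 * a * c)) = 1 / (4 * c) := by field_simp
    have e2 : (b : ℝ) * (1 / (4 * b * c)) = 1 / (4 * c) := by field_simp
    have e3 : (1 : ℝ) / (4 * c) + 1 / (4 * c) = 1 / (2 * c) := by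
      field_simp
      ring
    linarith
  -- floor identity
  have hKz : ((c : ℤ) * ⌊z⌋ - a * ⌊x⌋ - b * ⌊y⌋ : ℤ) = (0 : ℤ) := by
    have hreal : (((c : ℤ) * ⌊z⌋ - a * ⌊x⌋ - b * ⌊y⌋ : ℤ) : ℝ)
        = a * Int.fract x + b * Int.fract y - c * Int.fract z := by
      push_cast
      rw [Int.fract, Int.fract, Int.fract]
      push_cast
      linarith [hkey]
    have hax : (a : ℝ) * Int.fract x < 1 / 4 := by
      calc (a : ℝ) * Int.fract x < a * (1 / (4 * a)) := mul_lt_mul_of_pos_left hx4 ha'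
        _ = 1 / 4 := by field_simp <;> ring
    have hby : (b : ℝ) * Int.fract y < 1 / 4 := by
      calc (b : ℝ) * Int.fract y < b * (1 / (4 * b)) := mul_lt_mul_of_pos_left hy4 hb'
        _ = 1 / 4 := by field_simp <;> ring
    have hcz : (c : ℝ) * Int.fract z < 1 / 2 := by
      calc (c : ℝ) * Int.fract z < c * (1 / (2 * c)) := mul_lt_mul_of_pos_left hz2 hc'
        _ = 1 / 2 := by field_simp <;> ring
    have hnnx : (0 : ℝ) ≤ (a : ℝ) * Int.fract x :=
      mul_nonneg ha'.le (Int.fract_nonneg x)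
    have hnny : (0 : ℝ) ≤ (b : ℝ) * Int.fract y :=
      mul_nonneg hb'.le (Int.fract_nonneg y)
    have hnnz : (0 : ℝ) ≤ (c : ℝ) * Int.fract z :=
      mul_nonneg hc'.le (Int.fract_nonneg z)
    have habs : |(((c : ℤ) * ⌊z⌋ - a * ⌊x⌋ - b * ⌊y⌋ : ℤ) : ℝ)| < 1 := by
      rw [hreal, abs_lt]; constructor <;> linarith
    rw [abs_lt] at habs
    have hl : (-1 : ℤ) < (c : ℤ) * ⌊z⌋ - a * ⌊x⌋ - b * ⌊y⌋ := by exact_mod_cast habs.1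
    have hr : ((c : ℤ) * ⌊z⌋ - a * ⌊x⌋ - b * ⌊y⌋ : ℤ) < 1 := by exact_mod_cast habs.2
    omega
  refine ⟨hx4, hy4, hz2, by omega, ?_⟩
  have h14a : (1 : ℝ) / (4 * a) ≤ 1 / 2 := by
    apply one_div_le_one_div_of_le (by norm_num)
    have : (1 : ℝ) ≤ a := by exact_mod_cast ha
    linarith
  have h14b : (1 : ℝ) / (4 * b) ≤ 1 / 2 := by
    apply one_div_le_one_div_of_le (by norm_num)
    have : (1 : ℝ) ≤ b := by exact_mod_cast hb
    linarith
  have h12c : (1 : ℝ) / (2 * c) ≤ 1 / 2 := by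
    apply one_div_le_one_div_of_le (by norm_num)
    have : (1 : ℝ) ≤ c := by exact_mod_cast hc
    linarith
  simp only [max_lt_iff]
  exact ⟨hx4.trans_le h14a, hy4.trans_le h14b, hz2.trans_le h12c⟩
end

section
/- There is no real number α_S > 1 such that for all α > 1 the equation x + y = z is solvable in PS(α) if α < α_S and not solvable if α > α_S. Equivalently, the set { α > 2 : x + y = z is solvable in PS(α) } is unbounded (indeed dense in (2, ∞)). -/
/-- The Piatetski-Shapiro set `PS(α) = { ⌊n^α⌋ : n ∈ ℕ, n ≥ 1 }`. -/
def PS (α : ℝ) : Set ℤ := {m | ∃ n : ℕ, 0 < n ∧ m = ⌊(n : ℝ) ^ α⌋}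

/-- The equation `x + y = z` is solvable in `PS(α)`: there are infinitely many
pairwise distinct triples `(x, y, z) ∈ PS(α)³` with `x + y = z`. -/
def SolvableXYZ (α : ℝ) : Prop :=
  {p : ℤ × ℤ × ℤ | p.1 ∈ PS α ∧ p.2.1 ∈ PS α ∧ p.2.2 ∈ PS α ∧
    p.1 ≠ p.2.1 ∧ p.1 ≠ p.2.2 ∧ p.2.1 ≠ p.2.2 ∧
    p.1 + p.2.1 = p.2.2}.Infinite

open Real Filter Set



-- upper: t^p - (t-1)^p ≤ p * t^(p-1)
lemma aux_upper {t p : ℝ} (ht : 1 ≤ t) (hp : 1 ≤ p) :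
    t ^ p - (t - 1) ^ p ≤ p * t ^ (p - 1) := by
  have ht0 : (0:ℝ) < t := lt_of_lt_of_le one_pos ht
  have hs : (-1:ℝ) ≤ -(1/t) := by
    have : 1/t ≤ 1 := by rw [div_le_one ht0]; exact ht
    linarith
  have hb := one_add_mul_self_le_rpow_one_add hs hp
  have he : (1 + -(1/t)) = (t-1)/t := by field_simp; ring
  rw [he] at hb
  have hd : ((t-1)/t) ^ p = (t-1)^p / t^p := by
    rw [Real.div_rpow (by linarith) (le_of_lt ht0)]
  rw [hd] at hb
  have htp : (0:ℝ) < t ^ p := Real.rpow_pos_of_pos ht0 p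
  have h4 := (mul_le_mul_of_nonneg_left hb (le_of_lt htp))
  have h2 : t^p * ((t-1)^p / t^p) = (t-1)^p := by field_simp
  rw [h2] at h4
  have h3 : t^p * (1 + p * -(1/t)) = t^p - p * (t^p / t) := by field_simp; ring
  rw [h3] at h4
  rw [Real.rpow_sub_one ht0.ne' p]
  linarith

-- lower: p * (t-1)^(p-1) ≤ t^p - (t-1)^p
lemma aux_lower {t p : ℝ} (ht : 2 ≤ t) (hp : 1 ≤ p) :
    p * (t - 1) ^ (p - 1) ≤ t ^ p - (t - 1) ^ p := by
  have ht1 : (1:ℝ) ≤ t - 1 := by linarith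
  have ht0 : (0:ℝ) < t - 1 := by linarith
  have hs : (-1:ℝ) ≤ 1/(t-1) := by
    have : (0:ℝ) ≤ 1/(t-1) := by positivity
    linarith
  have hb := one_add_mul_self_le_rpow_one_add hs hp
  have he : (1 + 1/(t-1)) = t/(t-1) := by field_simp; ring
  rw [he] at hb
  have hd : (t/(t-1)) ^ p = t^p / (t-1)^p := by
    rw [Real.div_rpow (by linarith) (le_of_lt ht0)]
  rw [hd] at hb
  have htp : (0:ℝ) < (t-1) ^ p := Real.rpow_pos_of_pos ht0 p
  have h4 := (mul_le_mul_of_nonneg_left hb (le_of_lt htp))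
  have h2 : (t-1)^p * (t^p / (t-1)^p) = t^p := by field_simp
  rw [h2] at h4
  have h3 : (t-1)^p * (1 + p * (1/(t-1))) = (t-1)^p + p * ((t-1)^p / (t-1)) := by
    field_simp
  rw [h3] at h4
  rw [Real.rpow_sub_one ht0.ne' p]
  linarith

lemma add_one_rpow {u p : ℝ} (hu : 1 ≤ u) (hp : 1 ≤ p) : u ^ p + 1 ≤ (u + 1) ^ p := by
  have h := aux_lower (t := u + 1) (p := p) (by linarith) hp
  simp only [add_sub_cancel_right] at h
  have h2 : (1:ℝ) ≤ u ^ (p - 1) := by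
    have := Real.rpow_le_rpow_of_exponent_le hu (by linarith : (0:ℝ) ≤ p - 1)
    rwa [Real.rpow_zero] at this
  nlinarith

lemma floor_pin {t c β : ℝ} (ht : 1 ≤ t) (hcβ : c ≤ β) (hup : t ^ β < ⌊t ^ c⌋ + 1) :
    ⌊t ^ β⌋ = ⌊t ^ c⌋ := by
  have hlo : ⌊t ^ c⌋ ≤ ⌊t ^ β⌋ :=
    Int.floor_le_floor (Real.rpow_le_rpow_of_exponent_le ht hcβ)
  have hhi : ⌊t ^ β⌋ ≤ ⌊t ^ c⌋ := by
    have : ⌊t ^ β⌋ < ⌊t ^ c⌋ + 1 := by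
      rw [Int.floor_lt]; push_cast; exact hup
    omega
  omega

set_option maxHeartbeats 4000000 in
lemma setup (a b : ℝ) (ha : 1 < a) (hab : a < b) (B : ℤ) :
    ∃ (l n : ℕ) (c : ℝ), 4 ≤ l ∧ n + 2 ≤ l ∧ 2 ≤ n ∧ (B.toNat ⊔ 2) + 1 ≤ n ∧
      a < c ∧ c < b ∧
      ⌊((l:ℝ)) ^ c⌋ - ⌊((l:ℝ)-1) ^ c⌋ - ⌊(n:ℝ) ^ c⌋ = 0 := by
  have ha0 : (0:ℝ) < a := by linarith
  have hb1 : (1:ℝ) < b := by linarith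
  set C : ℝ := (a + 3) ^ (1/a) + 1 with hC
  have hC1 : (1:ℝ) < C := by
    have h : (0:ℝ) < (a + 3) ^ (1/a) := Real.rpow_pos_of_pos (by linarith) _
    rw [hC]; linarith
  set K : ℕ := max B.toNat 2 with hK
  have he : (0:ℝ) < b/a - 1 := by
    rw [sub_pos, lt_div_iff₀ ha0]; linarith
  -- choose l
  have hev1 : ∀ᶠ l : ℕ in atTop, (2 ^ (b-1) * (C ^ b + 2) : ℝ) ≤ (l:ℝ) ^ (b/a - 1) :=
    ((tendsto_rpow_atTop he).comp tendsto_natCast_atTop_atTop).eventually_ge_atTop _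
  have hev2 : ∀ᶠ l : ℕ in atTop, (((K:ℝ) + 1) ^ a : ℝ) ≤ ((l:ℝ) - 1) ^ (a - 1) := by
    have h1 : Tendsto (fun l : ℕ => (l:ℝ) - 1) atTop atTop :=
      tendsto_atTop_add_const_right _ (-1) tendsto_natCast_atTop_atTop
    exact ((tendsto_rpow_atTop (by linarith : (0:ℝ) < a - 1)).comp h1).eventually_ge_atTop _
  have hev3 : ∀ᶠ l : ℕ in atTop, (C + 2 : ℝ) ≤ (l:ℝ) ^ (1/a) :=
    ((tendsto_rpow_atTop (by positivity)).comp tendsto_natCast_atTop_atTop).eventually_ge_atTop _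
  have hev4 : ∀ᶠ l : ℕ in atTop, 4 ≤ l := eventually_ge_atTop 4
  obtain ⟨l, hl⟩ := (hev1.and (hev2.and (hev3.and hev4))).exists
  obtain ⟨hE1, hE2, hE3, hl4⟩ := hl
  set L : ℝ := (l:ℝ) with hLdef
  have hL4 : (4:ℝ) ≤ L := by rw [hLdef]; exact_mod_cast hl4
  have hL1 : (1:ℝ) ≤ L := by linarith
  have hL0 : (0:ℝ) < L := by linarith
  have hLm1 : (2:ℝ) ≤ L - 1 := by linarith
  have hLm0 : (0:ℝ) < L - 1 := by linarith
  set R : ℝ := L ^ a - (L - 1) ^ a + 3 with hRdef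
  have hRlow : a * (L-1) ^ (a-1) + 3 ≤ R := by
    have := aux_lower (t := L) (p := a) (by linarith) ha.le
    rw [hRdef]; linarith
  have hR3 : (3:ℝ) ≤ R := by
    have h1 : (0:ℝ) ≤ a * (L-1)^(a-1) := by positivity
    linarith
  have hR0 : (0:ℝ) < R := by linarith
  set n : ℕ := ⌈R ^ (1/a)⌉₊ with hndef
  have hRa : (0:ℝ) < R ^ (1/a) := Real.rpow_pos_of_pos hR0 _
  have hn_ge : R ^ (1/a) ≤ (n:ℝ) := Nat.le_ceil _
  have hn_le : (n:ℝ) < R ^ (1/a) + 1 := Nat.ceil_lt_add_one hRa.le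
  have hnR : R ≤ (n:ℝ) ^ a := by
    have h := Real.rpow_le_rpow hRa.le hn_ge ha0.le
    rwa [← Real.rpow_mul hR0.le, one_div_mul_cancel ha0.ne', Real.rpow_one] at h
  -- upper bound on n
  have hLfrac1 : (1:ℝ) ≤ L ^ ((a-1)/a) := by
    have := Real.rpow_le_rpow_of_exponent_le hL1 (show (0:ℝ) ≤ (a-1)/a from div_nonneg (by linarith) ha0.le)
    rwa [Real.rpow_zero] at this
  have hRup : R ≤ (a + 3) * L ^ (a-1) := by
    have h := aux_upper (t := L) (p := a) hL1 ha.le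
    have hL1a : (1:ℝ) ≤ L ^ (a-1) := by
      have := Real.rpow_le_rpow_of_exponent_le hL1 (by linarith : (0:ℝ) ≤ a - 1)
      rwa [Real.rpow_zero] at this
    rw [hRdef]; nlinarith
  have hn_up : (n:ℝ) ≤ C * L ^ ((a-1)/a) := by
    have h1 : R ^ (1/a) ≤ ((a+3) * L ^ (a-1)) ^ (1/a) :=
      Real.rpow_le_rpow hR0.le hRup (by positivity)
    have h2 : ((a+3) * L ^ (a-1)) ^ (1/a) = (a+3) ^ (1/a) * L ^ ((a-1)/a) := by
      rw [Real.mul_rpow (by linarith : (0:ℝ) ≤ a+3) (by positivity),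
        ← Real.rpow_mul hL0.le]
      ring_nf
    rw [h2] at h1
    have h3 : (a+3) ^ (1/a) * L ^ ((a-1)/a) + 1 ≤ C * L ^ ((a-1)/a) := by
      rw [hC]; nlinarith [Real.rpow_pos_of_pos (show (0:ℝ) < a+3 by linarith) (1/a)]
    linarith
  -- lower bound on n : K < n
  have hKn : K + 1 ≤ n := by
    by_contra hcon
    push_neg at hcon
    have hn_lt : (n:ℝ) < (K:ℝ) + 1 := by exact_mod_cast hcon
    have h1 : (n:ℝ) ^ a < ((K:ℝ) + 1) ^ a :=
      Real.rpow_lt_rpow (by positivity) hn_lt ha0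
    have h2 : ((K:ℝ)+1) ^ a ≤ (L-1) ^ (a-1) := hE2
    have h3 : (L-1) ^ (a-1) ≤ R := by
      have h4 : 1 * (L-1)^(a-1) ≤ a * (L-1)^(a-1) :=
        mul_le_mul_of_nonneg_right ha.le (Real.rpow_pos_of_pos hLm0 (a-1)).le
      rw [one_mul] at h4
      linarith
    linarith
  have hn2 : 2 ≤ n := by
    have : 2 ≤ K := le_max_right _ _
    omega
  have hn0 : (0:ℝ) < (n:ℝ) := by positivity
  -- n + 2 ≤ l
  have hsplit : L ^ ((a-1)/a) * L ^ (1/a) = L := by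
    rw [← Real.rpow_add hL0, ← add_div, sub_add_cancel, div_self ha0.ne',
      Real.rpow_one]
  have hfrac_pos : (0:ℝ) < L ^ ((a-1)/a) := Real.rpow_pos_of_pos hL0 _
  have hmul : L ^ ((a-1)/a) * (C+2) ≤ L := by
    calc L ^ ((a-1)/a) * (C+2) ≤ L ^ ((a-1)/a) * L ^ (1/a) :=
          mul_le_mul_of_nonneg_left hE3 hfrac_pos.le
      _ = L := hsplit
  have hn_L : (n:ℝ) + 2 ≤ L := by nlinarith [hn_up, hLfrac1, hmul]
  have hnl : n + 2 ≤ l := by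
    have h := hn_L
    rw [hLdef] at h
    exact_mod_cast h
  -- n^b bound
  have hn_b : (n:ℝ) ^ b + 2 ≤ L ^ b - (L-1) ^ b := by
    set P : ℝ := L ^ ((a-1)/a*b) with hPdef
    set T : ℝ := (2:ℝ) ^ (b-1) with hTdef
    have hP0 : (0:ℝ) < P := Real.rpow_pos_of_pos hL0 _
    have hP1 : (1:ℝ) ≤ P := by
      have := Real.rpow_le_rpow_of_exponent_le hL1
        (show (0:ℝ) ≤ (a-1)/a*b from
          mul_nonneg (div_nonneg (by linarith) ha0.le) (by linarith))
      rw [Real.rpow_zero] at this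
      exact this
    have hT0 : (0:ℝ) < T := Real.rpow_pos_of_pos two_pos _
    have h1 : (n:ℝ) ^ b ≤ C ^ b * P := by
      have h := Real.rpow_le_rpow hn0.le hn_up (by linarith : (0:ℝ) ≤ b)
      rwa [Real.mul_rpow (by linarith) hfrac_pos.le, ← Real.rpow_mul hL0.le] at h
    have hexp : (a-1)/a*b + (b/a-1) = b - 1 := by field_simp; ring
    have h3 : L ^ (b-1) = P * L ^ (b/a-1) := by
      rw [hPdef, ← Real.rpow_add hL0, hexp]
    have h4 : L ^ (b-1) / T ≤ (L-1) ^ (b-1) := by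
      have h5 : (L/2) ^ (b-1) = L ^ (b-1) / T := by
        rw [hTdef, Real.div_rpow hL0.le (by norm_num : (0:ℝ) ≤ 2)]
      rw [← h5]
      exact Real.rpow_le_rpow (by linarith) (by linarith) (by linarith)
    have h6 : P * (T * (C ^ b + 2)) ≤ P * L ^ (b/a-1) :=
      mul_le_mul_of_nonneg_left hE1 hP0.le
    have h7 : P * (C ^ b + 2) ≤ L ^ (b-1) / T := by
      rw [h3, le_div_iff₀ hT0]
      nlinarith [h6]
    have h8 : (L-1) ^ (b-1) ≤ b * (L-1) ^ (b-1) := by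
      nlinarith [Real.rpow_pos_of_pos hLm0 (b-1)]
    have h9 := aux_lower (t := L) (p := b) (by linarith) hb1.le
    have hCb : (0:ℝ) < C ^ b := Real.rpow_pos_of_pos (by linarith) _
    nlinarith [h1, h4, h7, h8, h9, hP1, hCb]
  have hM1 : (1:ℝ) ≤ L - 1 := by linarith
  have hn1 : (1:ℝ) ≤ (n:ℝ) := by exact_mod_cast Nat.one_le_of_lt (by omega : 1 < n)
  set H : ℝ → ℤ := fun α => ⌊L ^ α⌋ - ⌊(L-1) ^ α⌋ - ⌊(n:ℝ) ^ α⌋ with hHdef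
  have hHa : H a < 0 := by
    have f1 : ((⌊L ^ a⌋:ℝ)) ≤ L ^ a := Int.floor_le _
    have f2 : (L-1) ^ a - 1 < (⌊(L-1)^a⌋:ℝ) := Int.sub_one_lt_floor _
    have f3 : (n:ℝ) ^ a - 1 < (⌊(n:ℝ)^a⌋:ℝ) := Int.sub_one_lt_floor _
    have hcast : (H a : ℝ) < 0 := by
      simp only [hHdef]
      push_cast
      rw [hRdef] at hnR
      linarith
    exact_mod_cast hcast
  have hHb : 0 < H b := by
    have f1 : L ^ b - 1 < ((⌊L ^ b⌋:ℝ)) := Int.sub_one_lt_floor _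
    have f2 : (⌊(L-1)^b⌋:ℝ) ≤ (L-1) ^ b := Int.floor_le _
    have f3 : (⌊(n:ℝ)^b⌋:ℝ) ≤ (n:ℝ) ^ b := Int.floor_le _
    have hcast : (0:ℝ) < (H b : ℝ) := by
      simp only [hHdef]
      push_cast
      linarith
    exact_mod_cast hcast
  set S : Set ℝ := {α | α ∈ Set.Icc a b ∧ 0 ≤ H α} with hSdef
  have hbS : b ∈ S := ⟨⟨hab.le, le_refl b⟩, hHb.le⟩
  have hSne : S.Nonempty := ⟨b, hbS⟩
  have hSbdd : BddBelow S := ⟨a, fun α hα => hα.1.1⟩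
  set c : ℝ := sInf S with hcdef
  have hac : a ≤ c := le_csInf hSne (fun α hα => hα.1.1)
  have hcb : c ≤ b := csInf_le hSbdd hbS
  have hc1 : 1 < c := lt_of_lt_of_le ha hac
  have mono : ∀ t : ℝ, 1 ≤ t → ∀ u v : ℝ, u ≤ v → ⌊t ^ u⌋ ≤ ⌊t ^ v⌋ :=
    fun t ht u v huv => Int.floor_le_floor (Real.rpow_le_rpow_of_exponent_le ht huv)
  have contL : ContinuousAt (fun β : ℝ => L ^ β) c :=
    Real.continuousAt_const_rpow (by positivity : L ≠ 0)
  have hHc0 : 0 ≤ H c := by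
    by_contra hneg
    push_neg at hneg
    have hlt : L ^ c < (⌊L ^ c⌋:ℝ) + 1 := Int.lt_floor_add_one _
    have ev : ∀ᶠ β in nhds c, L ^ β < (⌊L ^ c⌋:ℝ) + 1 := contL.eventually_lt_const hlt
    rw [Metric.eventually_nhds_iff] at ev
    obtain ⟨ε, hε, hball⟩ := ev
    obtain ⟨s, hsS, hs⟩ := exists_lt_of_csInf_lt hSne
      (show sInf S < c + ε by rw [← hcdef]; linarith)
    have hcs : c ≤ s := csInf_le hSbdd hsS
    have hdist : dist s c < ε := by
      rw [Real.dist_eq, abs_of_nonneg (by linarith)]; linarith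
    have hup := hball hdist
    have e1 : ⌊L ^ s⌋ ≤ ⌊L ^ c⌋ := by
      have : ⌊L ^ s⌋ < ⌊L ^ c⌋ + 1 := by
        rw [Int.floor_lt]; push_cast; exact hup
      omega
    have e2 := mono (L-1) hM1 c s hcs
    have e3 := mono (n:ℝ) hn1 c s hcs
    have e4 : (0:ℤ) ≤ H s := hsS.2
    simp only [hHdef] at e4 hneg
    omega
  have haclt : a < c := by
    rcases lt_or_eq_of_le hac with h | h
    · exact h
    · exfalso; rw [← h] at hHc0; omega
  have hHc0' : H c ≤ 0 := by
    have hgt : (⌊L ^ c⌋:ℝ) - 1 < L ^ c := by linarith [Int.floor_le (L ^ c)]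
    have ev : ∀ᶠ β in nhds c, (⌊L ^ c⌋:ℝ) - 1 < L ^ β := contL.eventually_const_lt hgt
    rw [Metric.eventually_nhds_iff] at ev
    obtain ⟨ε, hε, hball⟩ := ev
    set β : ℝ := max a (c - ε/2) with hβdef
    have hβc : β < c := max_lt haclt (by linarith)
    have hβa : a ≤ β := le_max_left _ _
    have hβdist : dist β c < ε := by
      rw [Real.dist_eq, abs_of_nonpos (by linarith)]
      have h5 : c - ε/2 ≤ β := le_max_right _ _
      linarith
    have hlo := hball hβdist
    have e1 : ⌊L ^ c⌋ - 1 ≤ ⌊L ^ β⌋ := by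
      rw [Int.le_floor]; push_cast; linarith
    have e2 := mono (L-1) hM1 β c hβc.le
    have e3 := mono (n:ℝ) hn1 β c hβc.le
    have hβS : β ∉ S := fun hmem => absurd (csInf_le hSbdd hmem) (not_le.mpr hβc)
    have hβneg : ¬ (0 ≤ H β) := fun hh => hβS ⟨⟨hβa, le_trans hβc.le hcb⟩, hh⟩
    simp only [hHdef] at hβneg e1 ⊢
    omega
  have hHc : H c = 0 := le_antisymm hHc0' hHc0
  have hcblt : c < b := by
    rcases lt_or_eq_of_le hcb with h | h
    · exact h
    · exfalso; rw [h] at hHc; omega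
  refine ⟨l, n, c, hl4, hnl, hn2, hKn, haclt, hcblt, ?_⟩
  simp only [hHdef] at hHc
  rw [hLdef] at hHc
  exact hHc

lemma step (a b : ℝ) (ha : 1 < a) (hab : a < b) (B : ℤ) :
    ∃ (c d : ℝ) (x y z : ℤ), a ≤ c ∧ c < d ∧ d ≤ b ∧ x + y = z ∧ B < x ∧ x < y ∧ 0 < x ∧
      ∀ α ∈ Set.Icc c d, x ∈ PS α ∧ y ∈ PS α ∧ z ∈ PS α := by
  obtain ⟨l, n, c, hl4, hnl, hn2, hKn, hac, hcb, hHc⟩ := setup a b ha hab B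
  have hc1 : 1 < c := lt_trans ha hac
  have hL1 : (1:ℝ) ≤ (l:ℝ) := by exact_mod_cast Nat.one_le_of_lt (by omega : 1 < l)
  have hM1 : (1:ℝ) ≤ (l:ℝ) - 1 := by
    have : (2:ℝ) ≤ (l:ℝ) := by exact_mod_cast (by omega : 2 ≤ l)
    linarith
  have hn1 : (1:ℝ) ≤ (n:ℝ) := by exact_mod_cast Nat.one_le_of_lt (by omega : 1 < n)
  have hn0 : (0:ℝ) < (n:ℝ) := by linarith
  -- continuity events at c
  have contL : ContinuousAt (fun β : ℝ => ((l:ℝ)) ^ β) c :=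
    Real.continuousAt_const_rpow (by positivity : ((l:ℝ)) ≠ 0)
  have contM : ContinuousAt (fun β : ℝ => ((l:ℝ) - 1) ^ β) c :=
    Real.continuousAt_const_rpow (by linarith : ((l:ℝ) - 1) ≠ 0)
  have contN : ContinuousAt (fun β : ℝ => ((n:ℝ)) ^ β) c :=
    Real.continuousAt_const_rpow (by positivity : ((n:ℝ)) ≠ 0)
  have evL : ∀ᶠ β in nhds c, ((l:ℝ)) ^ β < (⌊((l:ℝ)) ^ c⌋:ℝ) + 1 :=
    contL.eventually_lt_const (Int.lt_floor_add_one _)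
  have evM : ∀ᶠ β in nhds c, ((l:ℝ) - 1) ^ β < (⌊((l:ℝ) - 1) ^ c⌋:ℝ) + 1 :=
    contM.eventually_lt_const (Int.lt_floor_add_one _)
  have evN : ∀ᶠ β in nhds c, ((n:ℝ)) ^ β < (⌊((n:ℝ)) ^ c⌋:ℝ) + 1 :=
    contN.eventually_lt_const (Int.lt_floor_add_one _)
  have ev := evL.and (evM.and evN)
  rw [Metric.eventually_nhds_iff] at ev
  obtain ⟨ε, hε, hball⟩ := ev
  set d : ℝ := min (c + ε/2) ((c+b)/2) with hddef
  have hcd : c < d := lt_min (by linarith) (by linarith)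
  have hdb : d ≤ b := le_trans (min_le_right _ _) (by linarith)
  have hdc : d ≤ c + ε/2 := min_le_left _ _
  have hpin : ∀ α ∈ Set.Icc c d,
      ⌊((l:ℝ)) ^ α⌋ = ⌊((l:ℝ)) ^ c⌋ ∧ ⌊((l:ℝ) - 1) ^ α⌋ = ⌊((l:ℝ) - 1) ^ c⌋ ∧
      ⌊((n:ℝ)) ^ α⌋ = ⌊((n:ℝ)) ^ c⌋ := by
    intro α hα
    have hdist : dist α c < ε := by
      rw [Real.dist_eq, abs_of_nonneg (by linarith [hα.1])]
      linarith [hα.2]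
    obtain ⟨eL, eM, eN⟩ := hball hdist
    exact ⟨floor_pin hL1 hα.1 eL, floor_pin hM1 hα.1 eM, floor_pin hn1 hα.1 eN⟩
  refine ⟨c, d, ⌊((n:ℝ)) ^ c⌋, ⌊((l:ℝ) - 1) ^ c⌋, ⌊((l:ℝ)) ^ c⌋, hac.le, hcd, hdb,
    by omega, ?_, ?_, ?_, ?_⟩
  · -- B < x
    have h1 : (n:ℝ) ≤ (n:ℝ) ^ c := by
      have := Real.rpow_le_rpow_of_exponent_le hn1 (show (1:ℝ) ≤ c from hc1.le)
      rwa [Real.rpow_one] at this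
    have h2 : (n:ℤ) ≤ ⌊(n:ℝ) ^ c⌋ := by
      rw [Int.le_floor]; push_cast; exact h1
    have h3 : B ≤ (B.toNat : ℤ) := Int.self_le_toNat B
    have h4 : (B.toNat : ℤ) < (n:ℤ) := by
      have : B.toNat < n := by omega
      exact_mod_cast this
    omega
  · -- x < y
    have h1 : (n:ℝ) ^ c + 1 ≤ ((n:ℝ) + 1) ^ c := add_one_rpow hn1 hc1.le
    have h2 : ((n:ℝ) + 1) ^ c ≤ ((l:ℝ) - 1) ^ c := by
      apply Real.rpow_le_rpow (by positivity) _ (by linarith)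
      have : ((n:ℝ)) + 2 ≤ (l:ℝ) := by exact_mod_cast hnl
      linarith
    have h3 : ⌊(n:ℝ) ^ c⌋ + 1 ≤ ⌊((l:ℝ) - 1) ^ c⌋ := by
      have h4 : ⌊(n:ℝ) ^ c + 1⌋ ≤ ⌊((l:ℝ) - 1) ^ c⌋ := Int.floor_le_floor (by linarith)
      rwa [Int.floor_add_one] at h4
    omega
  · -- 0 < x
    have h1 : (1:ℝ) ≤ (n:ℝ) ^ c := by
      have := Real.rpow_le_rpow_of_exponent_le hn1 (show (0:ℝ) ≤ c by linarith)
      rwa [Real.rpow_zero] at this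
    have : (1:ℤ) ≤ ⌊(n:ℝ) ^ c⌋ := by
      rw [Int.le_floor]; push_cast; exact h1
    omega
  · intro α hα
    obtain ⟨eL, eM, eN⟩ := hpin α hα
    refine ⟨⟨n, by omega, eN.symm⟩, ⟨l - 1, by omega, ?_⟩, ⟨l, by omega, eL.symm⟩⟩
    have hcast : ((l - 1 : ℕ) : ℝ) = (l:ℝ) - 1 := by
      have : (1:ℕ) ≤ l := by omega
      push_cast [this]
      ring
    rw [hcast]
    exact eM.symm

structure Stg where
  c : ℝ
  d : ℝ
  x : ℤ
  y : ℤ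
  z : ℤ
  h1 : 1 < c
  h2 : c < d
  hxyz : x + y = z
  hxy : x < y
  hx : 0 < x
  good : ∀ α ∈ Set.Icc c d, x ∈ PS α ∧ y ∈ PS α ∧ z ∈ PS α

lemma stepStg (s : Stg) : ∃ t : Stg, s.c ≤ t.c ∧ t.d ≤ s.d ∧ s.z < t.x := by
  obtain ⟨c, d, x, y, z, h1, h2, h3, h4, h5, h6, h7, h8⟩ :=
    step s.c s.d s.h1 s.h2 s.z
  exact ⟨⟨c, d, x, y, z, lt_of_lt_of_le s.h1 h1, h2, h4, h6, h7, h8⟩, h1, h3, h5⟩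

lemma main (a b : ℝ) (ha : 1 < a) (hab : a < b) :
    ∃ α, α ∈ Set.Icc a b ∧ SolvableXYZ α := by
  obtain ⟨c0, d0, x0, y0, z0, h1, h2, h3, h4, h5, h6, h7, h8⟩ := step a b ha hab 0
  choose g hg1 hg2 hg3 using stepStg
  set s0 : Stg := ⟨c0, d0, x0, y0, z0, lt_of_lt_of_le ha h1, h2, h4, h6, h7, h8⟩ with hs0
  set f : ℕ → Stg := fun k => g^[k] s0 with hf
  have hfs : ∀ k, f (k+1) = g (f k) := fun k => Function.iterate_succ_apply' g k s0
  have hf0 : f 0 = s0 := rfl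
  have hmc : Monotone fun k => (f k).c :=
    monotone_nat_of_le_succ fun k => by rw [hfs]; exact hg1 _
  have hmd : Antitone fun k => (f k).d :=
    antitone_nat_of_succ_le fun k => by rw [hfs]; exact hg2 _
  have hcd : ∀ k, (f k).c < (f k).d := fun k => (f k).h2
  have hbdd : BddAbove (Set.range fun k => (f k).c) := by
    refine ⟨(f 0).d, ?_⟩
    rintro _ ⟨k, rfl⟩
    exact le_trans (hcd k).le (hmd (Nat.zero_le k))
  set α : ℝ := ⨆ k, (f k).c with hα
  have hαc : ∀ k, (f k).c ≤ α := fun k => le_ciSup hbdd k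
  have hαd : ∀ k, α ≤ (f k).d := by
    intro k
    refine ciSup_le fun j => ?_
    rcases le_total j k with h | h
    · exact le_trans (hmc h) (hcd k).le
    · exact le_trans (hcd j).le (hmd h)
  have hαIcc : ∀ k, α ∈ Set.Icc (f k).c (f k).d := fun k => ⟨hαc k, hαd k⟩
  have hzx : ∀ k, (f k).z < (f (k+1)).x := fun k => by rw [hfs]; exact hg3 _
  have hxz : ∀ k, (f k).x < (f k).z := fun k => by
    have := (f k).hxyz; have := (f k).hxy; have := (f k).hx; omega
  have hyz : ∀ k, (f k).y < (f k).z := fun k => by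
    have := (f k).hxyz; have := (f k).hxy; have := (f k).hx; omega
  have hzmono : StrictMono fun k => (f k).z :=
    strictMono_nat_of_lt_succ fun k => lt_trans (hzx k) (hxz (k+1))
  refine ⟨α, ⟨le_trans h1 (hαc 0), le_trans (hαd 0) h3⟩, ?_⟩
  apply Set.infinite_of_injective_forall_mem
    (f := fun k => (((f k).x, (f k).y, (f k).z) : ℤ × ℤ × ℤ))
  · intro j k hjk
    have : (f j).z = (f k).z := congrArg (fun p : ℤ × ℤ × ℤ => p.2.2) hjk
    exact hzmono.injective this
  · intro k
    obtain ⟨gx, gy, gz⟩ := (f k).good α (hαIcc k)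
    refine ⟨gx, gy, gz, ?_, ?_, ?_, (f k).hxyz⟩
    · exact ne_of_lt (f k).hxy
    · exact ne_of_lt (hxz k)
    · exact ne_of_lt (hyz k)

theorem stmt15 :
    (¬ ∃ αS : ℝ, 1 < αS ∧ ∀ α : ℝ, 1 < α →
        ((α < αS → SolvableXYZ α) ∧ (αS < α → ¬ SolvableXYZ α))) ∧
    ∀ α : ℝ, 2 < α → α ∈ closure {β : ℝ | 2 < β ∧ SolvableXYZ β} := by
  have dens : ∀ α : ℝ, 2 < α → α ∈ closure {β : ℝ | 2 < β ∧ SolvableXYZ β} := by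
    intro α hα
    rw [Metric.mem_closure_iff]
    intro ε hε
    set a : ℝ := max ((2 + α)/2) (α - ε/2) with hadef
    have ha2 : 2 < a := lt_of_lt_of_le (by linarith) (le_max_left _ _)
    have haα : a < α := max_lt (by linarith) (by linarith)
    obtain ⟨β, hβIcc, hβs⟩ := main a α (by linarith) haα
    refine ⟨β, ⟨lt_of_lt_of_le ha2 hβIcc.1, hβs⟩, ?_⟩
    have h1 : α - ε/2 ≤ β := le_trans (le_max_right _ _) hβIcc.1
    rw [Real.dist_eq, abs_of_nonneg (by linarith [hβIcc.2])]
    linarith [hβIcc.2]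
  refine ⟨?_, dens⟩
  rintro ⟨αS, hαS, h⟩
  set α0 : ℝ := max αS 2 + 1 with hα0def
  have hα0 : 2 < α0 := by
    have := le_max_right αS 2
    rw [hα0def]; linarith
  have hcl := dens α0 hα0
  rw [Metric.mem_closure_iff] at hcl
  obtain ⟨β, ⟨hβ2, hβs⟩, hd⟩ := hcl 1 one_pos
  have hβαS : αS < β := by
    rw [Real.dist_eq] at hd
    have h2 := abs_lt.mp hd
    have h3 := le_max_left αS 2
    rw [hα0def] at h2
    linarith [h2.2]
  exact (h β (by linarith)).2 hβαS hβs
end
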